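/- arXiv:1309.6082 — 2 statements merged into one kernel-verified Lean document; each statement's English description precedes it below -/
import Mathlib

section
/- Additive sewing as a special case: let U be a Banach space and let μ_{ts}(x) = x + A_{ts} where A : {(s,t) : 0 ≤ s ≤ t ≤ T} → U is continuous with A_{ss} = 0 and ‖A_{ts} − A_{us} − A_{tu}‖ ≤ c₁|t−s|^a for some a > 1. Then (μ_{ts}) is a C¹-approximate flow, and the associated flow has the form φ_{ts}(x) = x + I_t − I_s for a unique path I : [0,T] → U with I₀ = 0 and ‖(I_t − I_s) − A_{ts}‖ ≤ c|t−s|^a. -/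
set_option maxHeartbeats 1000000

noncomputable section

open Set

set_option maxHeartbeats 1000000

noncomputable section
open Set

set_option linter.unusedSectionVars false

namespace AdditiveSewingAux

variable {U : Type*} [NormedAddCommGroup U] [NormedSpace ℝ U] [CompleteSpace U]

lemma sum_range_two_mul {M : Type*} [AddCommMonoid M] (f : ℕ → M) (k : ℕ) :
    ∑ j ∈ Finset.range (2 * k), f j
      = ∑ j ∈ Finset.range k, (f (2 * j) + f (2 * j + 1)) := by
  induction k with
  | zero => simp
  | succ k ih =>
    rw [Finset.sum_range_succ, ← ih, Nat.mul_succ, Finset.sum_range_succ,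
      Finset.sum_range_succ, add_assoc]

/-- grid point `k * T / 2^n`. -/
def gp (T : ℝ) (n k : ℕ) : ℝ := k * T / 2 ^ n

/-- index of the largest grid point `≤ t`. -/
def gi (T : ℝ) (n : ℕ) (t : ℝ) : ℕ := ⌊t * 2 ^ n / T⌋₊

/-- Riemann-type sum for the sewing construction. -/
def sI (A : ℝ → ℝ → U) (T : ℝ) (n : ℕ) (t : ℝ) : U :=
  (∑ j ∈ Finset.range (gi T n t), A (gp T n (j + 1)) (gp T n j)) + A t (gp T n (gi T n t))

variable {T : ℝ} (hT : 0 < T)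
include hT

lemma gp_nonneg (n k : ℕ) : 0 ≤ gp T n k := by
  unfold gp; positivity

lemma gp_mono (n : ℕ) {k l : ℕ} (h : k ≤ l) : gp T n k ≤ gp T n l := by
  unfold gp
  gcongr


lemma gp_succ_sub (n k : ℕ) : gp T n (k + 1) - gp T n k = T / 2 ^ n := by
  unfold gp
  push_cast
  ring

lemma gp_two_mul (n k : ℕ) : gp T (n + 1) (2 * k) = gp T n k := by
  unfold gp
  push_cast
  rw [pow_succ]
  field_simp

lemma gp_pow (n : ℕ) : gp T n (2 ^ n) = T := by
  unfold gp
  push_cast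
  field_simp

lemma gp_zero (n : ℕ) : gp T n 0 = 0 := by simp [gp]

lemma gp_gi_le {t : ℝ} (ht : 0 ≤ t) (n : ℕ) : gp T n (gi T n t) ≤ t := by
  have h1 : (gi T n t : ℝ) ≤ t * 2 ^ n / T := Nat.floor_le (by positivity)
  have h2 : (gi T n t : ℝ) * T ≤ t * 2 ^ n := by rwa [← le_div_iff₀ hT]
  unfold gp
  rw [div_le_iff₀ (by positivity)]
  linarith

lemma lt_gp_gi_succ (t : ℝ) (n : ℕ) : t < gp T n (gi T n t + 1) := by
  have h1 : t * 2 ^ n / T < (gi T n t : ℝ) + 1 := Nat.lt_floor_add_one _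
  have h2 : t * 2 ^ n < ((gi T n t : ℝ) + 1) * T := by rwa [div_lt_iff₀ hT] at h1
  unfold gp
  rw [lt_div_iff₀ (by positivity)]
  push_cast
  linarith

lemma gi_mono (n : ℕ) {s t : ℝ} (h : s ≤ t) : gi T n s ≤ gi T n t := by
  apply Nat.floor_le_floor
  gcongr

lemma gi_le_pow (n : ℕ) {t : ℝ} (htT : t ≤ T) : gi T n t ≤ 2 ^ n := by
  have h1 : t * 2 ^ n / T ≤ ((2 ^ n : ℕ) : ℝ) := by
    push_cast
    rw [div_le_iff₀ hT]
    have : (0:ℝ) < 2 ^ n := by positivity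
    nlinarith
  calc gi T n t ≤ ⌊((2 ^ n : ℕ) : ℝ)⌋₊ := Nat.floor_le_floor h1
  _ = 2 ^ n := Nat.floor_natCast _

lemma gi_zero (n : ℕ) : gi T n 0 = 0 := by simp [gi]

lemma gi_succ_level (n : ℕ) {t : ℝ} (ht : 0 ≤ t) :
    gi T (n + 1) t = 2 * gi T n t ∨ gi T (n + 1) t = 2 * gi T n t + 1 := by
  have hx : (0:ℝ) ≤ t * 2 ^ n / T := by positivity
  have hkey : t * 2 ^ (n + 1) / T = 2 * (t * 2 ^ n / T) := by
    rw [pow_succ]; ring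
  have hlow : 2 * gi T n t ≤ gi T (n + 1) t := by
    apply Nat.le_floor
    rw [hkey]
    push_cast
    have := Nat.floor_le hx
    unfold gi
    linarith
  have hhigh : gi T (n + 1) t < 2 * gi T n t + 2 := by
    rw [gi, Nat.floor_lt (by rw [hkey]; positivity), hkey]
    push_cast
    have := Nat.lt_floor_add_one (t * 2 ^ n / T)
    unfold gi
    linarith
  omega



omit hT

/-- defect of one dyadic refinement on interval `j` of level `n`. -/
def dl (A : ℝ → ℝ → U) (T : ℝ) (n j : ℕ) : U :=
  A (gp T n (j + 1)) (gp T n j) - A (gp T (n + 1) (2 * j + 1)) (gp T n j)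
    - A (gp T n (j + 1)) (gp T (n + 1) (2 * j + 1))

variable {c₁ a : ℝ} {A : ℝ → ℝ → U}

section

variable (hT : 0 < T) (hc₁ : 0 < c₁) (ha : 1 < a)
  (hA : ∀ s u t, 0 ≤ s → s ≤ u → u ≤ t → t ≤ T →
      ‖A t s - A u s - A t u‖ ≤ c₁ * (t - s) ^ a)
include hT hc₁ ha hA

lemma dl_bound {n j : ℕ} (hj : j + 1 ≤ 2 ^ n) :
    ‖dl A T n j‖ ≤ c₁ * (T / 2 ^ n) ^ a := by
  have h1 : gp T n j ≤ gp T (n + 1) (2 * j + 1) := by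
    rw [← gp_two_mul hT n j]
    exact gp_mono hT (n+1) (by omega)
  have h2 : gp T (n + 1) (2 * j + 1) ≤ gp T n (j + 1) := by
    have : 2 * (j + 1) = 2 * j + 2 := by ring
    rw [← gp_two_mul hT n (j+1), this]
    exact gp_mono hT (n+1) (by omega)
  have h3 : gp T n (j + 1) ≤ T :=
    (gp_mono hT n hj).trans_eq (gp_pow hT n)
  have := hA (gp T n j) (gp T (n + 1) (2 * j + 1)) (gp T n (j + 1))
    (gp_nonneg hT n j) h1 h2 h3
  rw [gp_succ_sub hT n j] at this
  exact this

/-- The error in one refinement step, localized. -/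
lemma eps_bound {t : ℝ} (ht0 : 0 ≤ t) (htT : t ≤ T) (n : ℕ) :
    ‖sI A T (n + 1) t - sI A T n t + ∑ j ∈ Finset.range (gi T n t), dl A T n j‖
      ≤ c₁ * (T / 2 ^ n) ^ a := by
  set k := gi T n t with hk
  have hsum : ∑ j ∈ Finset.range (2 * k),
        A (gp T (n + 1) (j + 1)) (gp T (n + 1) j)
      = (∑ j ∈ Finset.range k, A (gp T n (j + 1)) (gp T n j))
          - ∑ j ∈ Finset.range k, dl A T n j := by
    rw [sum_range_two_mul, ← Finset.sum_sub_distrib]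
    apply Finset.sum_congr rfl
    intro j _
    have e1 : gp T (n + 1) (2 * j) = gp T n j := gp_two_mul hT n j
    have e2 : gp T (n + 1) (2 * j + 1 + 1) = gp T n (j + 1) := by
      have : 2 * j + 1 + 1 = 2 * (j + 1) := by ring
      rw [this, gp_two_mul hT]
    rw [e1, e2, dl]
    abel
  rcases gi_succ_level hT n ht0 with h2k | h2k
  · have : sI A T (n + 1) t - sI A T n t + ∑ j ∈ Finset.range (gi T n t), dl A T n j = 0 := by
      rw [sI, sI, h2k, ← hk, hsum, gp_two_mul hT n k]
      abel
    rw [this, norm_zero]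
    positivity
  · have hsplit : ∑ j ∈ Finset.range (2 * k + 1),
          A (gp T (n + 1) (j + 1)) (gp T (n + 1) j)
        = (∑ j ∈ Finset.range k, A (gp T n (j + 1)) (gp T n j))
            - (∑ j ∈ Finset.range k, dl A T n j)
            + A (gp T (n + 1) (2 * k + 1)) (gp T n k) := by
      rw [Finset.sum_range_succ, hsum, gp_two_mul hT n k]
    set m := gp T (n + 1) (2 * k + 1) with hm
    have hpkm : gp T n k ≤ m := by
      rw [hm, ← gp_two_mul hT n k]
      exact gp_mono hT (n+1) (by omega)
    have hmt : m ≤ t := by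
      have := gp_gi_le hT ht0 (n + 1)
      rwa [h2k] at this
    have heq : sI A T (n + 1) t - sI A T n t + ∑ j ∈ Finset.range (gi T n t), dl A T n j
        = -(A t (gp T n k) - A m (gp T n k) - A t m) := by
      rw [sI, sI, h2k, ← hk, hsplit, ← hm]
      abel
    rw [heq, norm_neg]
    have hb := hA (gp T n k) m t (gp_nonneg hT n k) hpkm hmt htT
    refine hb.trans ?_
    have hlt : t - gp T n k ≤ T / 2 ^ n := by
      have h1 : t < gp T n (k + 1) := lt_gp_gi_succ hT t n
      have h2 := gp_succ_sub hT n k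
      linarith
    have h0 : 0 ≤ t - gp T n k := by
      have := gp_gi_le hT ht0 n
      rw [← hk] at this
      linarith
    have := Real.rpow_le_rpow h0 hlt (by linarith : (0:ℝ) ≤ a)
    nlinarith [this, hc₁.le]

lemma step_bound {s t : ℝ} (hs0 : 0 ≤ s) (hst : s ≤ t) (htT : t ≤ T) (n : ℕ) :
    ‖(sI A T (n + 1) t - sI A T (n + 1) s) - (sI A T n t - sI A T n s)‖
      ≤ c₁ * (t - s) * (T / 2 ^ n) ^ (a - 1) + 3 * (c₁ * (T / 2 ^ n) ^ a) := by
  have ht0 : 0 ≤ t := hs0.trans hst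
  have hsT : s ≤ T := hst.trans htT
  have hk : gi T n s ≤ gi T n t := gi_mono hT n hst
  have hid : (sI A T (n + 1) t - sI A T (n + 1) s) - (sI A T n t - sI A T n s)
      = (sI A T (n + 1) t - sI A T n t + ∑ j ∈ Finset.range (gi T n t), dl A T n j)
        - (sI A T (n + 1) s - sI A T n s + ∑ j ∈ Finset.range (gi T n s), dl A T n j)
        - ∑ j ∈ Finset.Ico (gi T n s) (gi T n t), dl A T n j := by
    rw [Finset.sum_Ico_eq_sub _ hk]
    abel
  rw [hid]
  have h1 := eps_bound hT hc₁ ha hA ht0 htT n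
  have h2 := eps_bound hT hc₁ ha hA hs0 hsT n
  have h3 : ‖∑ j ∈ Finset.Ico (gi T n s) (gi T n t), dl A T n j‖
      ≤ ((gi T n t - gi T n s : ℕ) : ℝ) * (c₁ * (T / 2 ^ n) ^ a) := by
    refine (norm_sum_le _ _).trans ?_
    have := Finset.sum_le_card_nsmul (Finset.Ico (gi T n s) (gi T n t))
      (fun j => ‖dl A T n j‖) (c₁ * (T / 2 ^ n) ^ a) ?_
    · rwa [Nat.card_Ico, nsmul_eq_mul] at this
    intro j hj
    apply dl_bound hT hc₁ ha hA
    have hj2 : j < gi T n t := (Finset.mem_Ico.mp hj).2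
    have := gi_le_pow hT n htT
    omega
  have hApos : (0:ℝ) ≤ c₁ * (T / 2 ^ n) ^ a := by positivity
  have hcard : ((gi T n t - gi T n s : ℕ) : ℝ) ≤ (t - s) * 2 ^ n / T + 1 := by
    rw [Nat.cast_sub hk]
    have h4 : (gi T n t : ℝ) ≤ t * 2 ^ n / T := Nat.floor_le (by positivity)
    have h5 : s * 2 ^ n / T < (gi T n s : ℝ) + 1 := Nat.lt_floor_add_one _
    have he : (t - s) * 2 ^ n / T = t * 2 ^ n / T - s * 2 ^ n / T := by ring
    rw [he]
    linarith
  have h6 : ‖∑ j ∈ Finset.Ico (gi T n s) (gi T n t), dl A T n j‖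
      ≤ ((t - s) * 2 ^ n / T + 1) * (c₁ * (T / 2 ^ n) ^ a) :=
    h3.trans (mul_le_mul_of_nonneg_right hcard hApos)
  have hkey : ((t - s) * 2 ^ n / T) * (c₁ * (T / 2 ^ n) ^ a)
      = c₁ * (t - s) * (T / 2 ^ n) ^ (a - 1) := by
    rw [Real.rpow_sub (by positivity), Real.rpow_one]
    field_simp
  calc ‖_ - _ - _‖ ≤ ‖_ - _‖ + ‖∑ j ∈ Finset.Ico (gi T n s) (gi T n t), dl A T n j‖ :=
        norm_sub_le _ _
    _ ≤ ‖sI A T (n + 1) t - sI A T n t + ∑ j ∈ Finset.range (gi T n t), dl A T n j‖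
        + ‖sI A T (n + 1) s - sI A T n s + ∑ j ∈ Finset.range (gi T n s), dl A T n j‖
        + ‖∑ j ∈ Finset.Ico (gi T n s) (gi T n t), dl A T n j‖ := by
        have := norm_sub_le (sI A T (n + 1) t - sI A T n t
          + ∑ j ∈ Finset.range (gi T n t), dl A T n j)
          (sI A T (n + 1) s - sI A T n s + ∑ j ∈ Finset.range (gi T n s), dl A T n j)
        linarith
    _ ≤ c₁ * (t - s) * (T / 2 ^ n) ^ (a - 1) + 3 * (c₁ * (T / 2 ^ n) ^ a) := by
        nlinarith [h1, h2, h6, hkey]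


lemma base_bound {s t : ℝ}
    (hs0 : 0 ≤ s) (hst : s ≤ t) (htT : t ≤ T) {n : ℕ}
    (h01 : gi T n t ≤ gi T n s + 1) :
    ‖(sI A T n t - sI A T n s) - A t s‖ ≤ c₁ * (T / 2 ^ n) ^ a + c₁ * (t - s) ^ a := by
  have ht0 : 0 ≤ t := hs0.trans hst
  have hsT : s ≤ T := hst.trans htT
  have hk : gi T n s ≤ gi T n t := gi_mono hT n hst
  have hposd : (0:ℝ) ≤ c₁ * (t - s) ^ a := by
    have : (0:ℝ) ≤ (t - s) ^ a := Real.rpow_nonneg (by linarith) a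
    positivity
  have hposh : (0:ℝ) ≤ c₁ * (T / 2 ^ n) ^ a := by positivity
  have hpks : gp T n (gi T n s) ≤ s := gp_gi_le hT hs0 n
  have hpk0 : 0 ≤ gp T n (gi T n s) := gp_nonneg hT n _
  have hcase : gi T n t = gi T n s ∨ gi T n t = gi T n s + 1 := by omega
  rcases hcase with heq | heq
  · have hid : (sI A T n t - sI A T n s) - A t s
        = A t (gp T n (gi T n s)) - A s (gp T n (gi T n s)) - A t s := by
      rw [sI, sI, heq]
      abel
    rw [hid]
    refine (hA (gp T n (gi T n s)) s t hpk0 hpks hst htT).trans ?_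
    have h1 : t < gp T n (gi T n s + 1) := heq ▸ lt_gp_gi_succ hT t n
    have h2 := gp_succ_sub hT n (gi T n s)
    have h3 : t - gp T n (gi T n s) ≤ T / 2 ^ n := by linarith
    have h0 : 0 ≤ t - gp T n (gi T n s) := by linarith
    have := Real.rpow_le_rpow h0 h3 (by linarith : (0:ℝ) ≤ a)
    nlinarith [hc₁.le]
  · set k := gi T n s with hkdef
    set u := gp T n (k + 1) with hu
    have hsu : s ≤ u := (lt_gp_gi_succ hT s n).le
    have hut : u ≤ t := by
      have := gp_gi_le hT ht0 n
      rwa [heq] at this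
    have hid : (sI A T n t - sI A T n s) - A t s
        = (A u (gp T n k) - A s (gp T n k) - A u s)
          - (A t s - A u s - A t u) := by
      rw [sI, sI, heq, Finset.sum_range_succ]
      abel
    rw [hid]
    refine (norm_sub_le _ _).trans ?_
    have hX := hA (gp T n k) s u hpk0 hpks hsu (hut.trans htT)
    rw [gp_succ_sub hT n k] at hX
    have hY := hA s u t hs0 hsu hut htT
    linarith
end

lemma tele (f : ℕ → U) (b : ℕ → ℝ) (h : ∀ i, ‖f (i + 1) - f i‖ ≤ b i) (n m : ℕ) :
    ‖f (n + m) - f n‖ ≤ ∑ i ∈ Finset.range m, b (n + i) := by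
  induction m with
  | zero => simp
  | succ m ih =>
    have hid : f (n + (m + 1)) - f n = (f (n + m + 1) - f (n + m)) + (f (n + m) - f n) := by
      have : n + (m + 1) = n + m + 1 := rfl
      rw [this]
      abel
    rw [hid, Finset.sum_range_succ]
    have := norm_add_le (f (n + m + 1) - f (n + m)) (f (n + m) - f n)
    have h2 := h (n + m)
    linarith

lemma geom_bound {r : ℝ} (h0 : 0 ≤ r) (h1 : r < 1) (m : ℕ) :
    ∑ i ∈ Finset.range m, r ^ i ≤ (1 - r)⁻¹ := by
  have hs := hasSum_geometric_of_lt_one h0 h1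
  calc ∑ i ∈ Finset.range m, r ^ i ≤ ∑' n : ℕ, r ^ n :=
        Summable.sum_le_tsum (Finset.range m) (fun i _ => pow_nonneg h0 i) hs.summable
    _ = (1 - r)⁻¹ := hs.tsum_eq

lemma rpow_div_pow (hT : 0 < T) (b : ℝ) (n i : ℕ) :
    (T / 2 ^ (n + i)) ^ b = (T / 2 ^ n) ^ b * ((2:ℝ) ^ (-b)) ^ i := by
  have h1 : T / 2 ^ (n + i) = (T / 2 ^ n) * ((2:ℝ)⁻¹) ^ i := by
    rw [pow_add]
    field_simp
    rw [← mul_pow]; norm_num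
  rw [h1, Real.mul_rpow (by positivity) (by positivity)]
  congr 1
  rw [← Real.rpow_natCast ((2:ℝ)⁻¹) i, ← Real.rpow_natCast ((2:ℝ) ^ (-b)) i,
    ← Real.rpow_mul (by norm_num : (0:ℝ) ≤ 2⁻¹), ← Real.rpow_mul (by norm_num : (0:ℝ) ≤ 2),
    Real.inv_rpow (by norm_num : (0:ℝ) ≤ 2), ← Real.rpow_neg (by norm_num : (0:ℝ) ≤ 2)]
  congr 1
  ring

section

variable (hT : 0 < T) (hc₁ : 0 < c₁) (ha : 1 < a)
  (hA : ∀ s u t, 0 ≤ s → s ≤ u → u ≤ t → t ≤ T →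
      ‖A t s - A u s - A t u‖ ≤ c₁ * (t - s) ^ a)
  (hAzero : ∀ s, 0 ≤ s → s ≤ T → A s s = 0)
include hT

lemma sI_zero (hAzero : ∀ s, 0 ≤ s → s ≤ T → A s s = 0) (n : ℕ) : sI A T n 0 = 0 := by
  simp [sI, gi_zero hT, gp_zero hT, hAzero 0 le_rfl hT.le]

include hc₁ ha hA

lemma cauchy_sI (hAzero : ∀ s, 0 ≤ s → s ≤ T → A s s = 0)
    {t : ℝ} (ht0 : 0 ≤ t) (htT : t ≤ T) :
    CauchySeq (fun n => sI A T n t) := by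
  have hr0 : (0:ℝ) ≤ 2 ^ (1 - a) := (Real.rpow_pos_of_pos two_pos _).le
  have hr1 : (2:ℝ) ^ (1 - a) < 1 :=
    Real.rpow_lt_one_of_one_lt_of_neg one_lt_two (by linarith)
  apply cauchySeq_of_le_geometric ((2:ℝ) ^ (1 - a)) (4 * c₁ * T ^ a) hr1
  intro n
  rw [dist_eq_norm, norm_sub_rev]
  have h := step_bound hT hc₁ ha hA le_rfl ht0 htT n
  rw [sI_zero hT hAzero n, sI_zero hT hAzero (n + 1), sub_zero, sub_zero, sub_zero] at h
  refine h.trans ?_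
  have e1 : (T / 2 ^ n) ^ (a - 1) = T ^ (a - 1) * ((2:ℝ) ^ (1 - a)) ^ n := by
    have h0 := rpow_div_pow hT (a - 1) 0 n
    have : -(a - 1) = 1 - a := by ring
    rw [this] at h0
    simpa using h0
  have e2 : (T / 2 ^ n) ^ a = T ^ a * ((2:ℝ) ^ (-a)) ^ n := by
    have h0 := rpow_div_pow hT a 0 n
    simpa using h0
  have e4 : ((2:ℝ) ^ (-a)) ^ n ≤ ((2:ℝ) ^ (1 - a)) ^ n := by
    apply pow_le_pow_left₀ (Real.rpow_pos_of_pos two_pos _).le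
    exact Real.rpow_le_rpow_of_exponent_le one_le_two (by linarith)
  have e5 : T * T ^ (a - 1) = T ^ a := by
    nth_rewrite 1 [← Real.rpow_one T]
    rw [← Real.rpow_add hT]
    ring_nf
  have hrn : (0:ℝ) ≤ ((2:ℝ) ^ (1 - a)) ^ n := pow_nonneg hr0 n
  have hTa : (0:ℝ) ≤ T ^ (a - 1) := (Real.rpow_pos_of_pos hT _).le
  have B1 : c₁ * t * (T / 2 ^ n) ^ (a - 1) ≤ c₁ * T ^ a * ((2:ℝ) ^ (1 - a)) ^ n := by
    rw [e1, ← e5]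
    calc c₁ * t * (T ^ (a - 1) * ((2:ℝ) ^ (1 - a)) ^ n)
        ≤ c₁ * T * (T ^ (a - 1) * ((2:ℝ) ^ (1 - a)) ^ n) := by
          gcongr
      _ = c₁ * (T * T ^ (a - 1)) * ((2:ℝ) ^ (1 - a)) ^ n := by ring
  have B2 : 3 * (c₁ * (T / 2 ^ n) ^ a) ≤ 3 * (c₁ * T ^ a * ((2:ℝ) ^ (1 - a)) ^ n) := by
    rw [e2]
    have := mul_le_mul_of_nonneg_left e4 (by positivity : (0:ℝ) ≤ T ^ a)
    nlinarith [hc₁.le]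
  nlinarith [B1, B2]

lemma sewing_main (hAzero : ∀ s, 0 ≤ s → s ≤ T → A s s = 0)
    {s t : ℝ} (hs0 : 0 ≤ s) (hlt : s < t) (htT : t ≤ T) :
    ∃ n₀ : ℕ, ∀ m : ℕ, ‖(sI A T (n₀ + m) t - sI A T (n₀ + m) s) - A t s‖
      ≤ (c₁ * (1 + (2:ℝ) ^ a)
          + c₁ * (1 - (2:ℝ) ^ (1 - a))⁻¹ * ((2:ℝ) ^ (a - 1) + 3 * (2:ℝ) ^ a)) * (t - s) ^ a := by
  have ht0 : 0 ≤ t := hs0.trans hlt.le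
  set d := t - s with hd
  have hdpos : 0 < d := by simp [hd]; linarith
  have hdT : d ≤ T := by simp only [hd]; linarith
  have hfl1 : 1 ≤ ⌊T / d⌋₊ := by
    apply Nat.le_floor
    rw [Nat.cast_one, le_div_iff₀ hdpos]
    linarith
  set n₀ := Nat.log 2 ⌊T / d⌋₊ with hn₀
  have hpow_pos : (0:ℝ) < (2:ℝ) ^ n₀ := by positivity
  have h2n : (2:ℝ) ^ n₀ ≤ T / d := by
    have h1 : 2 ^ n₀ ≤ ⌊T / d⌋₊ := Nat.pow_log_le_self 2 (by omega)
    calc ((2:ℝ)) ^ n₀ = ((2 ^ n₀ : ℕ) : ℝ) := by push_cast; ring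
      _ ≤ (⌊T / d⌋₊ : ℝ) := by exact_mod_cast h1
      _ ≤ T / d := Nat.floor_le (by positivity)
  have hn2 : T / d < 2 * (2:ℝ) ^ n₀ := by
    have h1 : ⌊T / d⌋₊ < 2 ^ (n₀ + 1) := Nat.lt_pow_succ_log_self (by norm_num) _
    have h2 : T / d < (⌊T / d⌋₊ : ℝ) + 1 := Nat.lt_floor_add_one _
    have h3 : (⌊T / d⌋₊ : ℝ) + 1 ≤ ((2 ^ (n₀ + 1) : ℕ) : ℝ) := by exact_mod_cast h1
    have h4 : ((2 ^ (n₀ + 1) : ℕ) : ℝ) = 2 * (2:ℝ) ^ n₀ := by push_cast; ring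
    linarith
  set h := T / 2 ^ n₀ with hh
  have hhpos : 0 < h := by positivity
  have hdh : d ≤ h := by
    rw [hh, le_div_iff₀ hpow_pos]
    rw [le_div_iff₀ hdpos] at h2n
    linarith [h2n]
  have hh2d : h ≤ 2 * d := by
    rw [hh, div_le_iff₀ hpow_pos]
    rw [div_lt_iff₀ hdpos] at hn2
    nlinarith
  refine ⟨n₀, fun m => ?_⟩
  -- base estimate at level n₀
  have h01 : gi T n₀ t ≤ gi T n₀ s + 1 := by
    have hxs : (0:ℝ) ≤ s * 2 ^ n₀ / T := by positivity
    have hle : t * 2 ^ n₀ / T ≤ s * 2 ^ n₀ / T + 1 := by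
      have hkey : d * 2 ^ n₀ ≤ T := by
        rw [hh, le_div_iff₀ hpow_pos] at hdh
        linarith
      rw [div_add' _ _ _ hT.ne', div_le_div_iff_of_pos_right hT]
      nlinarith
    calc gi T n₀ t ≤ ⌊s * 2 ^ n₀ / T + 1⌋₊ := Nat.floor_le_floor hle
      _ = gi T n₀ s + 1 := by rw [Nat.floor_add_one hxs]; rfl
  have hbase := base_bound hT hc₁ ha hA hs0 hlt.le htT h01
  -- telescoping
  have hstep : ∀ i : ℕ,
      ‖((sI A T (i + 1) t - sI A T (i + 1) s) - A t s)
        - ((sI A T i t - sI A T i s) - A t s)‖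
      ≤ c₁ * d * (T / 2 ^ i) ^ (a - 1) + 3 * (c₁ * (T / 2 ^ i) ^ a) := by
    intro i
    have hid : ((sI A T (i + 1) t - sI A T (i + 1) s) - A t s)
        - ((sI A T i t - sI A T i s) - A t s)
        = (sI A T (i + 1) t - sI A T (i + 1) s) - (sI A T i t - sI A T i s) := by abel
    rw [hid]
    exact step_bound hT hc₁ ha hA hs0 hlt.le htT i
  have htele := tele (fun n => (sI A T n t - sI A T n s) - A t s)
    (fun i => c₁ * d * (T / 2 ^ i) ^ (a - 1) + 3 * (c₁ * (T / 2 ^ i) ^ a)) hstep n₀ m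
  -- geometric bound for the sum
  have hr0 : (0:ℝ) ≤ 2 ^ (1 - a) := (Real.rpow_pos_of_pos two_pos _).le
  have hr1 : (2:ℝ) ^ (1 - a) < 1 :=
    Real.rpow_lt_one_of_one_lt_of_neg one_lt_two (by linarith)
  set G := (1 - (2:ℝ) ^ (1 - a))⁻¹ with hG
  have hGpos : 0 < G := by
    rw [hG]
    exact inv_pos.mpr (by linarith)
  have hsum : ∑ i ∈ Finset.range m,
      (c₁ * d * (T / 2 ^ (n₀ + i)) ^ (a - 1) + 3 * (c₁ * (T / 2 ^ (n₀ + i)) ^ a))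
      ≤ (c₁ * d * h ^ (a - 1) + 3 * (c₁ * h ^ a)) * G := by
    have hterm : ∀ i : ℕ,
        c₁ * d * (T / 2 ^ (n₀ + i)) ^ (a - 1) + 3 * (c₁ * (T / 2 ^ (n₀ + i)) ^ a)
        ≤ (c₁ * d * h ^ (a - 1) + 3 * (c₁ * h ^ a)) * ((2:ℝ) ^ (1 - a)) ^ i := by
      intro i
      have e1 : (T / 2 ^ (n₀ + i)) ^ (a - 1) = h ^ (a - 1) * ((2:ℝ) ^ (1 - a)) ^ i := by
        have h0 := rpow_div_pow hT (a - 1) n₀ i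
        have he : -(a - 1) = 1 - a := by ring
        rw [he] at h0
        exact h0
      have e2 : (T / 2 ^ (n₀ + i)) ^ a = h ^ a * ((2:ℝ) ^ (-a)) ^ i :=
        rpow_div_pow hT a n₀ i
      have e4 : ((2:ℝ) ^ (-a)) ^ i ≤ ((2:ℝ) ^ (1 - a)) ^ i := by
        apply pow_le_pow_left₀ (Real.rpow_pos_of_pos two_pos _).le
        exact Real.rpow_le_rpow_of_exponent_le one_le_two (by linarith)
      rw [e1, e2]
      have hha : (0:ℝ) ≤ h ^ a := (Real.rpow_pos_of_pos hhpos _).le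
      have hha1 : (0:ℝ) ≤ h ^ (a - 1) := (Real.rpow_pos_of_pos hhpos _).le
      calc c₁ * d * (h ^ (a - 1) * ((2:ℝ) ^ (1 - a)) ^ i)
            + 3 * (c₁ * (h ^ a * ((2:ℝ) ^ (-a)) ^ i))
          ≤ c₁ * d * (h ^ (a - 1) * ((2:ℝ) ^ (1 - a)) ^ i)
            + 3 * (c₁ * (h ^ a * ((2:ℝ) ^ (1 - a)) ^ i)) := by
            gcongr
        _ = (c₁ * d * h ^ (a - 1) + 3 * (c₁ * h ^ a)) * ((2:ℝ) ^ (1 - a)) ^ i := by ring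
    calc ∑ i ∈ Finset.range m,
          (c₁ * d * (T / 2 ^ (n₀ + i)) ^ (a - 1) + 3 * (c₁ * (T / 2 ^ (n₀ + i)) ^ a))
        ≤ ∑ i ∈ Finset.range m,
          (c₁ * d * h ^ (a - 1) + 3 * (c₁ * h ^ a)) * ((2:ℝ) ^ (1 - a)) ^ i :=
          Finset.sum_le_sum fun i _ => hterm i
      _ = (c₁ * d * h ^ (a - 1) + 3 * (c₁ * h ^ a)) * ∑ i ∈ Finset.range m, ((2:ℝ) ^ (1 - a)) ^ i := by
          rw [Finset.mul_sum]
      _ ≤ (c₁ * d * h ^ (a - 1) + 3 * (c₁ * h ^ a)) * G := by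
          apply mul_le_mul_of_nonneg_left (geom_bound hr0 hr1 m)
          have hha : (0:ℝ) ≤ h ^ a := (Real.rpow_pos_of_pos hhpos _).le
          have hha1 : (0:ℝ) ≤ h ^ (a - 1) := (Real.rpow_pos_of_pos hhpos _).le
          positivity
  -- convert h-powers to d-powers
  have hda : (0:ℝ) < d ^ a := Real.rpow_pos_of_pos hdpos _
  have hha : h ^ a ≤ (2:ℝ) ^ a * d ^ a := by
    rw [← Real.mul_rpow (by norm_num) hdpos.le]
    exact Real.rpow_le_rpow hhpos.le hh2d (by linarith)
  have hha1 : h ^ (a - 1) ≤ (2:ℝ) ^ (a - 1) * d ^ (a - 1) := by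
    rw [← Real.mul_rpow (by norm_num) hdpos.le]
    exact Real.rpow_le_rpow hhpos.le hh2d (by linarith)
  have hdd : d * d ^ (a - 1) = d ^ a := by
    nth_rewrite 1 [← Real.rpow_one d]
    rw [← Real.rpow_add hdpos]
    ring_nf
  -- combine
  have hE : ‖(sI A T (n₀ + m) t - sI A T (n₀ + m) s) - A t s‖
      ≤ ((c₁ * d * h ^ (a - 1) + 3 * (c₁ * h ^ a)) * G) + (c₁ * h ^ a + c₁ * d ^ a) := by
    set X := (sI A T (n₀ + m) t - sI A T (n₀ + m) s) - A t s with hX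
    set Y := (sI A T n₀ t - sI A T n₀ s) - A t s with hY
    have h4 : ‖X‖ ≤ ‖X - Y‖ + ‖Y‖ := by
      have := norm_add_le (X - Y) Y
      rwa [sub_add_cancel] at this
    exact h4.trans (add_le_add (htele.trans hsum) hbase)
  refine hE.trans ?_
  have hd1a : (0:ℝ) ≤ d ^ (a - 1) := (Real.rpow_pos_of_pos hdpos _).le
  have hbig : (c₁ * d * h ^ (a - 1) + 3 * (c₁ * h ^ a)) * G
      ≤ c₁ * G * ((2:ℝ) ^ (a - 1) + 3 * (2:ℝ) ^ a) * d ^ a := by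
    have t1 : c₁ * d * h ^ (a - 1) ≤ c₁ * (2:ℝ) ^ (a - 1) * d ^ a := by
      calc c₁ * d * h ^ (a - 1) ≤ c₁ * d * ((2:ℝ) ^ (a - 1) * d ^ (a - 1)) := by
            apply mul_le_mul_of_nonneg_left hha1 (by positivity)
        _ = c₁ * (2:ℝ) ^ (a - 1) * (d * d ^ (a - 1)) := by ring
        _ = c₁ * (2:ℝ) ^ (a - 1) * d ^ a := by rw [hdd]
    have t2 : 3 * (c₁ * h ^ a) ≤ 3 * (c₁ * ((2:ℝ) ^ a * d ^ a)) := by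
      apply mul_le_mul_of_nonneg_left _ (by norm_num)
      exact mul_le_mul_of_nonneg_left hha hc₁.le
    have := add_le_add t1 t2
    have h4 : (c₁ * d * h ^ (a - 1) + 3 * (c₁ * h ^ a))
        ≤ c₁ * ((2:ℝ) ^ (a - 1) + 3 * (2:ℝ) ^ a) * d ^ a := by
      nlinarith
    calc (c₁ * d * h ^ (a - 1) + 3 * (c₁ * h ^ a)) * G
        ≤ (c₁ * ((2:ℝ) ^ (a - 1) + 3 * (2:ℝ) ^ a) * d ^ a) * G :=
          mul_le_mul_of_nonneg_right h4 hGpos.le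
      _ = c₁ * G * ((2:ℝ) ^ (a - 1) + 3 * (2:ℝ) ^ a) * d ^ a := by ring
  have hsmall : c₁ * h ^ a + c₁ * d ^ a ≤ c₁ * (1 + (2:ℝ) ^ a) * d ^ a := by
    have := mul_le_mul_of_nonneg_left hha hc₁.le
    nlinarith
  calc (c₁ * d * h ^ (a - 1) + 3 * (c₁ * h ^ a)) * G + (c₁ * h ^ a + c₁ * d ^ a)
      ≤ c₁ * G * ((2:ℝ) ^ (a - 1) + 3 * (2:ℝ) ^ a) * d ^ a
        + c₁ * (1 + (2:ℝ) ^ a) * d ^ a := add_le_add hbig hsmall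
    _ = (c₁ * (1 + (2:ℝ) ^ a) + c₁ * G * ((2:ℝ) ^ (a - 1) + 3 * (2:ℝ) ^ a)) * d ^ a := by ring

end

end AdditiveSewingAux

variable {U : Type*} [NormedAddCommGroup U] [NormedSpace ℝ U] [CompleteSpace U]

/-- A flow on `U` over the time interval `[0,T]`: `φ t s` is the map from time `s` to time `t`. -/
def IsFlow (T : ℝ) (φ : ℝ → ℝ → U → U) : Prop :=
  (∀ s, 0 ≤ s → s ≤ T → ∀ x, φ s s x = x) ∧
  (∀ s u t, 0 ≤ s → s ≤ u → u ≤ t → t ≤ T → ∀ x, φ t u (φ u s x) = φ t s x)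

/-- A `C¹`-approximate flow on `U` with constants `c₁` and `a > 1`:  a family of `C²` maps
`μ t s : U → U`, continuous in `(s,t)` in the uniform topology, with
`‖μ_{ts} - Id‖_{C²} = o_{t-s}(1)` and `‖μ_{tu} ∘ μ_{us} - μ_{ts}‖_{C¹} ≤ c₁ |t-s|^a`. -/
structure IsC1ApproxFlow (T c₁ a : ℝ) (μ : ℝ → ℝ → U → U) : Prop where
  smooth : ∀ s t, 0 ≤ s → s ≤ t → t ≤ T → ContDiff ℝ 2 (μ t s)
  cont : ∀ s t, 0 ≤ s → s ≤ t → t ≤ T → ∀ ε > (0:ℝ), ∃ η > (0:ℝ), ∀ s' t',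
      0 ≤ s' → s' ≤ t' → t' ≤ T → |s' - s| ≤ η → |t' - t| ≤ η →
      ∀ x, ‖μ t' s' x - μ t s x‖ ≤ ε
  near_id : ∀ ε > (0:ℝ), ∃ η > (0:ℝ), ∀ s t, 0 ≤ s → s ≤ t → t ≤ T → t - s ≤ η → ∀ x,
      ‖μ t s x - x‖ ≤ ε ∧ ‖fderiv ℝ (μ t s) x - ContinuousLinearMap.id ℝ U‖ ≤ ε ∧
      ‖iteratedFDeriv ℝ 2 (μ t s) x‖ ≤ ε
  c₁_pos : 0 < c₁
  a_gt_one : 1 < a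
  approx : ∀ s u t, 0 ≤ s → s ≤ u → u ≤ t → t ≤ T → ∀ x,
      ‖μ t u (μ u s x) - μ t s x‖ ≤ c₁ * (t - s) ^ a ∧
      ‖fderiv ℝ (fun z => μ t u (μ u s z)) x - fderiv ℝ (μ t s) x‖ ≤ c₁ * (t - s) ^ a

/-- `φ` is at uniform distance at most `c |t-s|^a` from `μ`, for `t - s ≤ δ`. -/
def Close (T a c δ : ℝ) (φ μ : ℝ → ℝ → U → U) : Prop :=
  ∀ s t, 0 ≤ s → s ≤ t → t ≤ T → t - s ≤ δ →
    ∀ x, ‖φ t s x - μ t s x‖ ≤ c * (t - s) ^ a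

/-- Composition of the maps `μ` along the partition `s = σ 0 < σ 1 < ⋯ < σ n = t`. -/
def compAlong (μ : ℝ → ℝ → U → U) (σ : ℕ → ℝ) : ℕ → U → U
  | 0 => fun x => x
  | n + 1 => fun x => μ (σ (n + 1)) (σ n) (compAlong μ σ n x)

open AdditiveSewingAux Filter Topology

/-- Additive sewing as a special case: if `A : {0 ≤ s ≤ t ≤ T} → U` is
continuous with `A_{ss} = 0` and `‖A_{ts} - A_{us} - A_{tu}‖ ≤ c₁ |t-s|^a`, `a > 1`, then
`μ_{ts}(x) = x + A_{ts}` is a `C¹`-approximate flow, and the associated flow is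
`φ_{ts}(x) = x + I_t - I_s` for a unique path `I` with `I_0 = 0` and
`‖(I_t - I_s) - A_{ts}‖ ≤ c |t-s|^a`. -/

theorem additive_sewing
    {T c₁ a : ℝ} (hT : 0 < T) (hc₁ : 0 < c₁) (ha : 1 < a)
    (A : ℝ → ℝ → U)
    (hAcont : ContinuousOn (fun q : ℝ × ℝ => A q.2 q.1)
      {q : ℝ × ℝ | 0 ≤ q.1 ∧ q.1 ≤ q.2 ∧ q.2 ≤ T})
    (hAzero : ∀ s, 0 ≤ s → s ≤ T → A s s = 0)
    (hA : ∀ s u t, 0 ≤ s → s ≤ u → u ≤ t → t ≤ T →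
      ‖A t s - A u s - A t u‖ ≤ c₁ * (t - s) ^ a) :
    IsC1ApproxFlow T c₁ a (fun t s (x : U) => x + A t s) ∧
    ∃ I : ℝ → U, I 0 = 0 ∧
      IsFlow T (fun t s (x : U) => x + (I t - I s)) ∧
      (∃ c : ℝ, ∀ s t, 0 ≤ s → s ≤ t → t ≤ T →
        ‖(I t - I s) - A t s‖ ≤ c * (t - s) ^ a) ∧
      ∀ J : ℝ → U, J 0 = 0 →
        (∃ c : ℝ, ∀ s t, 0 ≤ s → s ≤ t → t ≤ T →
          ‖(J t - J s) - A t s‖ ≤ c * (t - s) ^ a) →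
        ∀ t ∈ Icc (0:ℝ) T, J t = I t := by
  classical
  -- uniform continuity of `A` on the compact triangle
  have hK : IsCompact {q : ℝ × ℝ | 0 ≤ q.1 ∧ q.1 ≤ q.2 ∧ q.2 ≤ T} := by
    apply IsCompact.of_isClosed_subset ((isCompact_Icc (a := (0:ℝ)) (b := T)).prod isCompact_Icc)
    · have he : {q : ℝ × ℝ | 0 ≤ q.1 ∧ q.1 ≤ q.2 ∧ q.2 ≤ T}
          = {q : ℝ × ℝ | 0 ≤ q.1} ∩ ({q : ℝ × ℝ | q.1 ≤ q.2} ∩ {q : ℝ × ℝ | q.2 ≤ T}) := rfl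
      rw [he]
      exact (isClosed_le continuous_const continuous_fst).inter
        ((isClosed_le continuous_fst continuous_snd).inter
          (isClosed_le continuous_snd continuous_const))
    · rintro ⟨x, y⟩ ⟨h1, h2, h3⟩
      exact ⟨⟨h1, h2.trans h3⟩, ⟨h1.trans h2, h3⟩⟩
  have hUC := Metric.uniformContinuousOn_iff_le.mp
    (hK.uniformContinuousOn_of_continuous hAcont)
  constructor
  · -- the C¹-approximate flow structure
    constructor
    · intro s t _ _ _
      exact contDiff_id.add contDiff_const
    · intro s t hs hst htT ε hε
      obtain ⟨δ, hδ, hδ'⟩ := hUC ε hε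
      refine ⟨δ / 2, by linarith, ?_⟩
      intro s' t' hs' hst' ht'T hss htt x
      have hm1 : ((s', t') : ℝ × ℝ) ∈ {q : ℝ × ℝ | 0 ≤ q.1 ∧ q.1 ≤ q.2 ∧ q.2 ≤ T} :=
        ⟨hs', hst', ht'T⟩
      have hm2 : ((s, t) : ℝ × ℝ) ∈ {q : ℝ × ℝ | 0 ≤ q.1 ∧ q.1 ≤ q.2 ∧ q.2 ≤ T} :=
        ⟨hs, hst, htT⟩
      have hd : dist ((s', t') : ℝ × ℝ) ((s, t) : ℝ × ℝ) ≤ δ := by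
        rw [Prod.dist_eq]
        apply max_le
        · rw [Real.dist_eq]; linarith
        · rw [Real.dist_eq]; linarith
      have := hδ' (s', t') hm1 (s, t) hm2 hd
      rw [dist_eq_norm] at this
      have he : x + A t' s' - (x + A t s) = A t' s' - A t s := by abel
      rw [he]
      exact this
    · intro ε hε
      obtain ⟨δ, hδ, hδ'⟩ := hUC ε hε
      refine ⟨δ / 2, by linarith, ?_⟩
      intro s t hs hst htT hts x
      refine ⟨?_, ?_, ?_⟩
      · have hm1 : ((s, t) : ℝ × ℝ) ∈ {q : ℝ × ℝ | 0 ≤ q.1 ∧ q.1 ≤ q.2 ∧ q.2 ≤ T} :=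
          ⟨hs, hst, htT⟩
        have hm2 : ((s, s) : ℝ × ℝ) ∈ {q : ℝ × ℝ | 0 ≤ q.1 ∧ q.1 ≤ q.2 ∧ q.2 ≤ T} :=
          ⟨hs, le_rfl, hst.trans htT⟩
        have hd : dist ((s, t) : ℝ × ℝ) ((s, s) : ℝ × ℝ) ≤ δ := by
          rw [Prod.dist_eq]
          apply max_le
          · rw [Real.dist_eq]; simp; linarith
          · rw [Real.dist_eq]; rw [abs_of_nonneg (by linarith : (0:ℝ) ≤ t - s)]; linarith
        have := hδ' (s, t) hm1 (s, s) hm2 hd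
        rw [dist_eq_norm, hAzero s hs (hst.trans htT), sub_zero] at this
        have he : x + A t s - x = A t s := by abel
        rwa [he]
      · have h1 : fderiv ℝ (fun x : U => x + A t s) x = ContinuousLinearMap.id ℝ U := by
          rw [fderiv_add_const]
          exact fderiv_id
        rw [h1, sub_self, norm_zero]
        exact hε.le
      · have h2 : ‖iteratedFDeriv ℝ 2 (fun x : U => x + A t s) x‖
            = ‖iteratedFDeriv ℝ 1 (fderiv ℝ (fun x : U => x + A t s)) x‖ :=
          (norm_iteratedFDeriv_fderiv).symm
        have h3 : (fderiv ℝ (fun x : U => x + A t s))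
            = fun _ : U => ContinuousLinearMap.id ℝ U := by
          funext y
          rw [fderiv_add_const]
          exact fderiv_id
        rw [h2, h3, iteratedFDeriv_const_of_ne one_ne_zero]
        simp
        linarith
    · exact hc₁
    · exact ha
    · intro s u t hs hsu hut htT x
      have hst : s ≤ t := hsu.trans hut
      have hnn : (0:ℝ) ≤ c₁ * (t - s) ^ a :=
        mul_nonneg hc₁.le (Real.rpow_nonneg (by linarith) a)
      constructor
      · have he : x + A u s + A t u - (x + A t s) = -(A t s - A u s - A t u) := by abel
        rw [he, norm_neg]
        exact hA s u t hs hsu hut htT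
      · have h1 : fderiv ℝ (fun z : U => z + A u s + A t u) x
            = ContinuousLinearMap.id ℝ U := by
          have he : (fun z : U => z + A u s + A t u) = fun z : U => z + (A u s + A t u) := by
            funext z
            rw [add_assoc]
          rw [he, fderiv_add_const]
          exact fderiv_id
        have h2 : fderiv ℝ (fun z : U => z + A t s) x = ContinuousLinearMap.id ℝ U := by
          rw [fderiv_add_const]
          exact fderiv_id
        rw [h1, h2, sub_self, norm_zero]
        exact hnn
  · -- existence and uniqueness of the path I
    set I : ℝ → U := fun t => limUnder atTop (fun n => sI A T n t) with hI
    have htend : ∀ t, 0 ≤ t → t ≤ T → Tendsto (fun n => sI A T n t) atTop (𝓝 (I t)) := by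
      intro t ht0 htT
      obtain ⟨x, hx⟩ := cauchySeq_tendsto_of_complete (cauchy_sI hT hc₁ ha hA hAzero ht0 htT)
      have : I t = x := hx.limUnder_eq
      rw [this]
      exact hx
    have hI0 : I 0 = 0 := by
      have he : (fun n => sI A T n 0) = fun _ : ℕ => (0 : U) :=
        funext fun n => sI_zero hT hAzero n
      rw [hI]
      simp only [he]
      exact Filter.Tendsto.limUnder_eq (tendsto_const_nhds)
    set c := c₁ * (1 + (2:ℝ) ^ a)
        + c₁ * (1 - (2:ℝ) ^ (1 - a))⁻¹ * ((2:ℝ) ^ (a - 1) + 3 * (2:ℝ) ^ a) with hc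
    have hmain : ∀ s t, 0 ≤ s → s ≤ t → t ≤ T →
        ‖(I t - I s) - A t s‖ ≤ c * (t - s) ^ a := by
      intro s t hs0 hst htT
      rcases hst.eq_or_lt with rfl | hlt
      · have h1 : (I s - I s) - A s s = 0 := by
          rw [hAzero s hs0 htT]
          abel
        rw [h1, norm_zero, sub_self, Real.zero_rpow (by linarith : a ≠ 0), mul_zero]
      · obtain ⟨n₀, hn₀⟩ := sewing_main hT hc₁ ha hA hAzero hs0 hlt htT
        have ht' : Tendsto (fun m => sI A T (n₀ + m) t) atTop (𝓝 (I t)) := by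
          have := (htend t (hs0.trans hlt.le) htT).comp (tendsto_add_atTop_nat n₀)
          simpa [Function.comp_def, Nat.add_comm] using this
        have hs' : Tendsto (fun m => sI A T (n₀ + m) s) atTop (𝓝 (I s)) := by
          have := (htend s hs0 (hlt.le.trans htT)).comp (tendsto_add_atTop_nat n₀)
          simpa [Function.comp_def, Nat.add_comm] using this
        have h1 : Tendsto (fun m => (sI A T (n₀ + m) t - sI A T (n₀ + m) s) - A t s)
            atTop (𝓝 ((I t - I s) - A t s)) := (ht'.sub hs').sub tendsto_const_nhds
        exact le_of_tendsto h1.norm (Filter.Eventually.of_forall hn₀)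
    refine ⟨I, hI0, ⟨?_, ?_⟩, ⟨c, hmain⟩, ?_⟩
    · intro s _ _ x
      simp
    · intro s u t _ _ _ _ x
      show x + (I u - I s) + (I t - I u) = x + (I t - I s)
      abel
    · -- uniqueness
      rintro J hJ0 ⟨c', hc'⟩ t ⟨ht0, htT⟩
      have key : ∀ n : ℕ, 1 ≤ n → ‖J t - I t‖ ≤ (c' + c) * t ^ a * (n : ℝ) ^ (1 - a) := by
        intro n hn
        have hnR : (0:ℝ) < n := by exact_mod_cast hn
        have hdist := dist_le_range_sum_dist (fun k : ℕ => J (t * k / n) - I (t * k / n)) n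
        have hx0 : t * ((0:ℕ) : ℝ) / n = 0 := by simp
        have hxn : t * ((n:ℕ) : ℝ) / n = t := by field_simp
        simp only [hx0, hxn, hJ0, hI0, sub_zero, sub_self] at hdist
        rw [dist_zero_left] at hdist
        have hstepb : ∀ k ∈ Finset.range n,
            dist (J (t * k / n) - I (t * k / n))
              (J (t * (((k+1) : ℕ) : ℝ) / n) - I (t * (((k+1) : ℕ) : ℝ) / n))
            ≤ (c' + c) * (t / n) ^ a := by
          intro k hk
          have hkn : (k : ℝ) + 1 ≤ n := by
            have := Finset.mem_range.mp hk
            exact_mod_cast this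
          have hxk0 : 0 ≤ t * k / n := by positivity
          have hxkk : t * k / n ≤ t * ((k : ℝ) + 1) / n := by
            apply div_le_div_of_nonneg_right ?_ hnR.le
            nlinarith
          have hxkT : t * ((k : ℝ) + 1) / n ≤ T := by
            have h5 : t * ((k : ℝ) + 1) / n ≤ t := by
              rw [div_le_iff₀ hnR]
              nlinarith
            linarith
          have hdd : t * ((k:ℝ) + 1) / n - t * k / n = t / n := by
            field_simp
            ring
          push_cast
          rw [dist_eq_norm, norm_sub_rev]
          have hid : (J (t * ((k:ℝ)+1) / n) - I (t * ((k:ℝ)+1) / n)) - (J (t * k / n) - I (t * k / n))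
              = ((J (t * ((k:ℝ)+1) / n) - J (t * k / n)) - A (t * ((k:ℝ)+1) / n) (t * k / n))
                - ((I (t * ((k:ℝ)+1) / n) - I (t * k / n)) - A (t * ((k:ℝ)+1) / n) (t * k / n)) := by
            abel
          rw [hid]
          refine (norm_sub_le _ _).trans ?_
          have hJb := hc' (t * k / n) (t * ((k:ℝ)+1) / n) hxk0 hxkk hxkT
          have hIb := hmain (t * k / n) (t * ((k:ℝ)+1) / n) hxk0 hxkk hxkT
          rw [hdd] at hJb hIb
          linarith
        have hsum := Finset.sum_le_card_nsmul (Finset.range n) _ _ hstepb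
        rw [Finset.card_range, nsmul_eq_mul] at hsum
        have hfin : (n : ℝ) * ((c' + c) * (t / n) ^ a) = (c' + c) * t ^ a * (n : ℝ) ^ (1 - a) := by
          rw [Real.div_rpow ht0 hnR.le, Real.rpow_sub hnR, Real.rpow_one]
          have hna : (0:ℝ) < (n:ℝ) ^ a := Real.rpow_pos_of_pos hnR a
          field_simp
        calc ‖J t - I t‖ ≤ ∑ k ∈ Finset.range n,
              dist (J (t * k / n) - I (t * k / n))
                (J (t * (((k+1) : ℕ) : ℝ) / n) - I (t * (((k+1) : ℕ) : ℝ) / n)) := hdist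
          _ ≤ (n : ℝ) * ((c' + c) * (t / n) ^ a) := hsum
          _ = (c' + c) * t ^ a * (n : ℝ) ^ (1 - a) := hfin
      have hlim : Tendsto (fun n : ℕ => (c' + c) * t ^ a * (n : ℝ) ^ (1 - a)) atTop (𝓝 0) := by
        have h1 : Tendsto (fun x : ℝ => x ^ (-(a - 1))) atTop (𝓝 0) :=
          tendsto_rpow_neg_atTop (by linarith)
        have h2 : Tendsto (fun n : ℕ => ((n:ℝ)) ^ (-(a - 1))) atTop (𝓝 0) :=
          h1.comp tendsto_natCast_atTop_atTop
        have h3 : (1 - a) = -(a - 1) := by ring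
        rw [h3]
        have := h2.const_mul ((c' + c) * t ^ a)
        simpa using this
      have hle0 : ‖J t - I t‖ ≤ 0 := by
        refine ge_of_tendsto hlim ?_
        filter_upwards [eventually_ge_atTop 1] with n hn using key n hn
      have : J t - I t = 0 := norm_eq_zero.mp (le_antisymm hle0 (norm_nonneg _))
      exact sub_eq_zero.mp this
end
end
end

section
/- Uniqueness in the flow construction: if μ is a C¹-approximate flow with constants c₁, a > 1, and φ, ψ are two flows on U such that ‖φ_{ts} − μ_{ts}‖_∞ ≤ c|t−s|^a and ‖ψ_{ts} − μ_{ts}‖_∞ ≤ c'|t−s|^a for all t−s ≤ δ, then φ = ψ on all of {(s,t) : 0 ≤ s ≤ t ≤ T}. -/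
noncomputable section

open Set

variable {U : Type*} [NormedAddCommGroup U] [NormedSpace ℝ U] [CompleteSpace U]

/-! ### Auxiliary material for the proof of uniqueness -/

set_option linter.unusedSectionVars false

open Filter Topology

lemma norm_itfd_one {V W : Type*} [NormedAddCommGroup V] [NormedSpace ℝ V]
    [NormedAddCommGroup W] [NormedSpace ℝ W] (g : V → W) (x : V) :
    ‖iteratedFDeriv ℝ 1 g x‖ = ‖fderiv ℝ g x‖ := by
  have h : (continuousMultilinearCurryFin1 ℝ V W) (iteratedFDeriv ℝ 1 g x) = fderiv ℝ g x := by
    ext v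
    simp [iteratedFDeriv_one_apply, Fin.snoc]
  rw [← h, LinearIsometryEquiv.norm_map]

lemma lip_of_fderiv {V W : Type*} [NormedAddCommGroup V] [NormedSpace ℝ V]
    [NormedAddCommGroup W] [NormedSpace ℝ W] {f : V → W} (hf : Differentiable ℝ f)
    {C : ℝ} (h : ∀ z, ‖fderiv ℝ f z‖ ≤ C) (x y : V) :
    ‖f x - f y‖ ≤ C * ‖x - y‖ :=
  Convex.norm_image_sub_le_of_norm_fderiv_le (fun z _ => hf z)
    (fun z _ => h z) convex_univ (mem_univ y) (mem_univ x)

lemma lip_of_fderiv_near_id {f : U → U} (hf : Differentiable ℝ f)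
    {r : ℝ} (h : ∀ z, ‖fderiv ℝ f z - ContinuousLinearMap.id ℝ U‖ ≤ r) (x y : U) :
    ‖f x - f y‖ ≤ (1 + r) * ‖x - y‖ := by
  have hg : Differentiable ℝ (fun z : U => f z - z) := hf.sub differentiable_id
  have hg' : ∀ z, ‖fderiv ℝ (fun z : U => f z - z) z‖ ≤ r := by
    intro z
    have : fderiv ℝ (fun z : U => f z - z) z = fderiv ℝ f z - ContinuousLinearMap.id ℝ U := by
      have := ((hf z).hasFDerivAt.sub (hasFDerivAt_id z)).fderiv
      exact this
    rw [this]; exact h z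
  have := lip_of_fderiv hg hg' x y
  have e : f x - f y = (f x - x - (f y - y)) + (x - y) := by abel
  calc ‖f x - f y‖ = ‖(f x - x - (f y - y)) + (x - y)‖ := by rw [e]
    _ ≤ ‖f x - x - (f y - y)‖ + ‖x - y‖ := norm_add_le _ _
    _ ≤ r * ‖x - y‖ + 1 * ‖x - y‖ := by
        rw [one_mul]; exact add_le_add this le_rfl
    _ = (1 + r) * ‖x - y‖ := by ring

lemma fderiv_lip {f : U → U} (hf : ContDiff ℝ 2 f)
    {ε : ℝ} (h : ∀ z, ‖iteratedFDeriv ℝ 2 f z‖ ≤ ε) (x y : U) :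
    ‖fderiv ℝ f x - fderiv ℝ f y‖ ≤ ε * ‖x - y‖ := by
  have hg : Differentiable ℝ (fderiv ℝ f) :=
    (hf.fderiv_right (m := 1) (by norm_num)).differentiable one_ne_zero
  refine lip_of_fderiv hg (fun z => ?_) x y
  have h1 : ‖fderiv ℝ (fderiv ℝ f) z‖ = ‖iteratedFDeriv ℝ 1 (fderiv ℝ f) z‖ :=
    (norm_itfd_one _ z).symm
  rw [h1, norm_iteratedFDeriv_fderiv]
  exact h z
lemma compAlong_add (μ : ℝ → ℝ → U → U) (σ : ℕ → ℝ) (m n : ℕ) (x : U) :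
    compAlong μ σ (m + n) x = compAlong μ (fun j => σ (m + j)) n (compAlong μ σ m x) := by
  induction n with
  | zero => rfl
  | succ n ih =>
      show compAlong μ σ ((m + n) + 1) x = _
      simp only [compAlong, ih]
      rw [Nat.add_assoc]

lemma compAlong_congr (μ : ℝ → ℝ → U → U) (σ σ' : ℕ → ℝ) (n : ℕ)
    (h : ∀ j ≤ n, σ j = σ' j) (x : U) :
    compAlong μ σ n x = compAlong μ σ' n x := by
  induction n with
  | zero => rfl
  | succ n ih =>
      simp only [compAlong]
      rw [h (n+1) le_rfl, h n (Nat.le_succ n), ih (fun j hj => h j (hj.trans (Nat.le_succ n)))]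

def dyadic (μ : ℝ → ℝ → U → U) (s t : ℝ) (k : ℕ) : U → U :=
  compAlong μ (fun j => s + j * (t - s) / 2 ^ k) (2 ^ k)

lemma dyadic_zero (μ : ℝ → ℝ → U → U) (s t : ℝ) (x : U) : dyadic μ s t 0 x = μ t s x := by
  have : dyadic μ s t 0 x = μ (s + (1:ℕ) * (t - s) / 2 ^ 0) (s + (0:ℕ) * (t - s) / 2 ^ 0) x := rfl
  rw [this]
  norm_num

lemma dyadic_succ (μ : ℝ → ℝ → U → U) (s t : ℝ) (k : ℕ) (x : U) :
    dyadic μ s t (k+1) x = dyadic μ ((s+t)/2) t k (dyadic μ s ((s+t)/2) k x) := by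
  have h2 : 2 ^ (k+1) = 2 ^ k + 2 ^ k := by ring
  unfold dyadic
  rw [h2, compAlong_add]
  have hpre : compAlong μ (fun j => s + j * (t - s) / 2 ^ (k+1)) (2 ^ k) x
      = compAlong μ (fun j => s + j * ((s+t)/2 - s) / 2 ^ k) (2 ^ k) x := by
    refine compAlong_congr _ _ _ _ (fun j _ => ?_) x
    have : ((2:ℝ) ^ (k+1)) = 2 * 2 ^ k := by ring
    rw [this]
    have h2k : (2:ℝ) ^ k ≠ 0 := by positivity
    field_simp
    ring_nf
  rw [hpre]
  refine compAlong_congr _ _ _ _ (fun j _ => ?_) _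
  push_cast
  have h2k : (2:ℝ) ^ k ≠ 0 := by positivity
  have : ((2:ℝ) ^ (k+1)) = 2 * 2 ^ k := by ring
  rw [this]
  field_simp
  ring_nf

lemma arith_F {eps K K' q c la : ℝ} (hq0 : 0 < q) (heps : 0 < eps) (heps1 : eps ≤ 1)
    (hK : 0 ≤ K) (hla : 0 ≤ la)
    (hrec : (2 + 3 * eps) * K' / q + 3 * K / q + c ≤ K') :
    (K' * (la / q) * (1 + 2 * eps) + eps * (K * (la / q)) * (1 + 2 * eps)
      + (1 + eps) * (K' * (la / q))) + c * la ≤ K' * la := by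
  have he3 : eps * (1 + 2 * eps) ≤ 3 := by nlinarith
  have hKla : (0:ℝ) ≤ K * (la / q) := by positivity
  have h1 : eps * (K * (la / q)) * (1 + 2 * eps) ≤ 3 * (K * (la / q)) := by
    nlinarith [mul_le_mul_of_nonneg_right he3 hKla]
  have h2 : (K' * (la / q) * (1 + 2 * eps) + 3 * (K * (la / q)) + (1 + eps) * (K' * (la / q)))
      + c * la = ((2 + 3 * eps) * K' / q + 3 * K / q + c) * la := by ring
  nlinarith [mul_le_mul_of_nonneg_right hrec hla]

lemma norm_tri {V : Type*} [SeminormedAddCommGroup V] (a b c d : V) :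
    ‖a - d‖ ≤ ‖a - b‖ + ‖b - c‖ + ‖c - d‖ := by
  have h : a - d = (a - b) + (b - c) + (c - d) := by abel
  rw [h]
  exact norm_add₃_le

section

variable {T c₁ a : ℝ} {μ : ℝ → ℝ → U → U}

lemma dyadic_contDiff (hμ : IsC1ApproxFlow T c₁ a μ) :
    ∀ k s t, 0 ≤ s → s ≤ t → t ≤ T → ContDiff ℝ 2 (dyadic μ s t k) := by
  intro k
  induction k with
  | zero =>
      intro s t h0 hst hT
      have : dyadic μ s t 0 = μ t s := funext fun x => dyadic_zero μ s t x
      rw [this]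
      exact hμ.smooth s t h0 hst hT
  | succ k ih =>
      intro s t h0 hst hT
      have : dyadic μ s t (k+1)
          = (dyadic μ ((s+t)/2) t k) ∘ (dyadic μ s ((s+t)/2) k) :=
        funext fun x => dyadic_succ μ s t k x
      rw [this]
      exact (ih ((s+t)/2) t (by linarith) (by linarith) hT).comp
        (ih s ((s+t)/2) h0 (by linarith) (by linarith))

lemma dyadic_key (hμ : IsC1ApproxFlow T c₁ a μ) {ε₀ η₀ K K' δ₀ : ℝ}
    (hε₀ : 0 < ε₀) (hε₀1 : ε₀ ≤ 1)
    (hnear : ∀ s t, 0 ≤ s → s ≤ t → t ≤ T → t - s ≤ η₀ → ∀ x,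
      ‖μ t s x - x‖ ≤ ε₀ ∧ ‖fderiv ℝ (μ t s) x - ContinuousLinearMap.id ℝ U‖ ≤ ε₀ ∧
      ‖iteratedFDeriv ℝ 2 (μ t s) x‖ ≤ ε₀)
    (hK : 0 ≤ K) (hK' : 0 ≤ K')
    (hKrec : (2 + ε₀) * K / 2 ^ a + c₁ ≤ K)
    (hK'rec : (2 + 3 * ε₀) * K' / 2 ^ a + 3 * K / 2 ^ a + c₁ ≤ K')
    (hδ₀ : 0 < δ₀) (hδ₀η : δ₀ ≤ η₀) (hδ₀K' : K' * δ₀ ^ a ≤ ε₀) :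
    ∀ k s t, 0 ≤ s → s ≤ t → t ≤ T → t - s ≤ δ₀ → ∀ x,
      ‖dyadic μ s t k x - μ t s x‖ ≤ K * (t - s) ^ a ∧
      ‖fderiv ℝ (dyadic μ s t k) x - fderiv ℝ (μ t s) x‖ ≤ K' * (t - s) ^ a := by
  have ha0 : (0:ℝ) ≤ a := by linarith [hμ.a_gt_one]
  have hq0 : (0:ℝ) < 2 ^ a := Real.rpow_pos_of_pos two_pos a
  intro k
  induction k with
  | zero =>
      intro s t h0 hst hT hδ x
      have h1 : dyadic μ s t 0 = μ t s := funext fun x => dyadic_zero μ s t x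
      have hla : (0:ℝ) ≤ (t - s) ^ a := Real.rpow_nonneg (by linarith) a
      rw [h1]
      constructor
      · simp
        positivity
      · simp
        positivity
  | succ k ih =>
      intro s t h0 hst hT hδ x
      set m := (s + t) / 2 with hm
      have hls : (0:ℝ) ≤ t - s := by linarith
      have hla : (0:ℝ) ≤ (t - s) ^ a := Real.rpow_nonneg hls a
      have hsm : s ≤ m := by rw [hm]; linarith
      have hmt : m ≤ t := by rw [hm]; linarith
      have h0m : 0 ≤ m := le_trans h0 hsm
      have hmT : m ≤ T := le_trans hmt hT
      have hms : m - s = (t - s) / 2 := by rw [hm]; ring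
      have htm : t - m = (t - s) / 2 := by rw [hm]; ring
      have hδms : m - s ≤ δ₀ := by rw [hms]; linarith
      have hδtm : t - m ≤ δ₀ := by rw [htm]; linarith
      have hhalf : ((t - s) / 2) ^ a = (t - s) ^ a / 2 ^ a :=
        Real.div_rpow hls (by norm_num) a
      have ems : (m - s) ^ a = (t - s) ^ a / 2 ^ a := by rw [hms]; exact hhalf
      have etm : (t - m) ^ a = (t - s) ^ a / 2 ^ a := by rw [htm]; exact hhalf
      -- induction hypotheses on both halves
      have ihB := ih s m h0 hsm hmT hδms
      have ihA := ih m t h0m hmt hT hδtm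
      -- abbreviations
      set B := dyadic μ s m k with hB
      set A := dyadic μ m t k with hA
      have hAc : ContDiff ℝ 2 A := dyadic_contDiff hμ k m t h0m hmt hT
      have hBc : ContDiff ℝ 2 B := dyadic_contDiff hμ k s m h0 hsm hmT
      have hμtm : ContDiff ℝ 2 (μ t m) := hμ.smooth m t h0m hmt hT
      have hμms : ContDiff ℝ 2 (μ m s) := hμ.smooth s m h0 hsm hmT
      have hneartm := hnear m t h0m hmt hT (le_trans hδtm hδ₀η)
      have hnearms := hnear s m h0 hsm hmT (le_trans hδms hδ₀η)
      have hsplit : ∀ y, dyadic μ s t (k+1) y = A (B y) := fun y => dyadic_succ μ s t k y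
      -- Lipschitz bound for μ t m
      have lipμtm : ∀ u v, ‖μ t m u - μ t m v‖ ≤ (1 + ε₀) * ‖u - v‖ := fun u v =>
        lip_of_fderiv_near_id (hμtm.differentiable two_ne_zero)
          (fun z => (hneartm z).2.1) u v
      -- C⁰ estimate
      have hE : ‖dyadic μ s t (k+1) x - μ t s x‖ ≤ K * (t - s) ^ a := by
        calc ‖dyadic μ s t (k+1) x - μ t s x‖ = ‖A (B x) - μ t s x‖ := by rw [hsplit x]
          _ ≤ ‖A (B x) - μ t m (B x)‖ + ‖μ t m (B x) - μ t m (μ m s x)‖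
              + ‖μ t m (μ m s x) - μ t s x‖ := norm_tri _ _ _ _
          _ ≤ K * ((t - s) ^ a / 2 ^ a) + (1 + ε₀) * (K * ((t - s) ^ a / 2 ^ a))
              + c₁ * (t - s) ^ a := by
              gcongr
              · calc ‖A (B x) - μ t m (B x)‖ ≤ K * (t - m) ^ a := (ihA (B x)).1
                  _ = K * ((t - s) ^ a / 2 ^ a) := by rw [etm]
              · calc ‖μ t m (B x) - μ t m (μ m s x)‖ ≤ (1 + ε₀) * ‖B x - μ m s x‖ :=
                    lipμtm _ _
                  _ ≤ (1 + ε₀) * (K * ((t - s) ^ a / 2 ^ a)) := by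
                      have := (ihB x).1
                      rw [ems] at this
                      gcongr
              · exact (hμ.approx s m t h0 hsm hmt hT x).1
          _ = ((2 + ε₀) * K / 2 ^ a + c₁) * (t - s) ^ a := by ring
          _ ≤ K * (t - s) ^ a := mul_le_mul_of_nonneg_right hKrec hla
      refine ⟨hE, ?_⟩
      -- C¹ estimate
      have hdA : Differentiable ℝ A := hAc.differentiable two_ne_zero
      have hdB : Differentiable ℝ B := hBc.differentiable two_ne_zero
      have hsplitf : dyadic μ s t (k+1) = A ∘ B := funext hsplit
      have hchain : fderiv ℝ (dyadic μ s t (k+1)) x = (fderiv ℝ A (B x)).comp (fderiv ℝ B x) := by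
        rw [hsplitf]
        exact fderiv_comp x (hdA (B x)) (hdB x)
      have hchainμ : fderiv ℝ (fun z => μ t m (μ m s z)) x
          = (fderiv ℝ (μ t m) (μ m s x)).comp (fderiv ℝ (μ m s) x) := by
        have := fderiv_comp (𝕜 := ℝ) x (hμtm.differentiable two_ne_zero (μ m s x))
          (hμms.differentiable two_ne_zero x)
        exact this
      set P := fderiv ℝ A (B x) with hP
      set P₀ := fderiv ℝ (μ t m) (B x) with hP₀
      set P₁ := fderiv ℝ (μ t m) (μ m s x) with hP₁
      set Q := fderiv ℝ B x with hQd
      set Q₀ := fderiv ℝ (μ m s) x with hQ₀d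
      rw [hchain]
      -- bounds
      have hPP₀ : ‖P - P₀‖ ≤ K' * ((t - s) ^ a / 2 ^ a) := by
        have := (ihA (B x)).2
        rw [etm] at this
        exact this
      have hQQ₀ : ‖Q - Q₀‖ ≤ K' * ((t - s) ^ a / 2 ^ a) := by
        have := (ihB x).2
        rw [ems] at this
        exact this
      have hq1 : (1:ℝ) ≤ 2 ^ a := Real.one_le_rpow one_le_two ha0
      have hsmall : K' * ((t - s) ^ a / 2 ^ a) ≤ ε₀ := by
        have h2 : (t - s) ^ a ≤ δ₀ ^ a := Real.rpow_le_rpow hls hδ ha0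
        have h1 : (t - s) ^ a / 2 ^ a ≤ δ₀ ^ a := le_trans (div_le_self hla hq1) h2
        calc K' * ((t - s) ^ a / 2 ^ a) ≤ K' * δ₀ ^ a := by
              exact mul_le_mul_of_nonneg_left h1 hK'
          _ ≤ ε₀ := hδ₀K'
      have hQ : ‖Q‖ ≤ 1 + 2 * ε₀ := by
        calc ‖Q‖ = ‖(Q - Q₀) + (Q₀ - ContinuousLinearMap.id ℝ U) + ContinuousLinearMap.id ℝ U‖ := by
              congr 1; abel
          _ ≤ ‖Q - Q₀‖ + ‖Q₀ - ContinuousLinearMap.id ℝ U‖ + ‖ContinuousLinearMap.id ℝ U‖ :=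
              norm_add₃_le
          _ ≤ ε₀ + ε₀ + 1 := by
              gcongr
              · exact le_trans hQQ₀ hsmall
              · exact (hnearms x).2.1
              · exact ContinuousLinearMap.norm_id_le
          _ = 1 + 2 * ε₀ := by ring
      have hP₁n : ‖P₁‖ ≤ 1 + ε₀ := by
        calc ‖P₁‖ = ‖(P₁ - ContinuousLinearMap.id ℝ U) + ContinuousLinearMap.id ℝ U‖ := by
              congr 1; abel
          _ ≤ ‖P₁ - ContinuousLinearMap.id ℝ U‖ + ‖ContinuousLinearMap.id ℝ U‖ := norm_add_le _ _
          _ ≤ ε₀ + 1 := add_le_add ((hneartm (μ m s x)).2.1) ContinuousLinearMap.norm_id_le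
          _ = 1 + ε₀ := by ring
      have hP₀P₁ : ‖P₀ - P₁‖ ≤ ε₀ * (K * ((t - s) ^ a / 2 ^ a)) := by
        calc ‖P₀ - P₁‖ ≤ ε₀ * ‖B x - μ m s x‖ :=
              fderiv_lip hμtm (fun z => (hneartm z).2.2) (B x) (μ m s x)
          _ ≤ ε₀ * (K * ((t - s) ^ a / 2 ^ a)) := by
              have := (ihB x).1
              rw [ems] at this
              gcongr
      have hiden : P.comp Q - P₁.comp Q₀
          = (P - P₀).comp Q + (P₀ - P₁).comp Q + P₁.comp (Q - Q₀) := by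
        rw [ContinuousLinearMap.sub_comp, ContinuousLinearMap.sub_comp,
          ContinuousLinearMap.comp_sub]
        abel
      have happ : ‖P₁.comp Q₀ - fderiv ℝ (μ t s) x‖ ≤ c₁ * (t - s) ^ a := by
        rw [← hchainμ]
        exact (hμ.approx s m t h0 hsm hmt hT x).2
      calc ‖P.comp Q - fderiv ℝ (μ t s) x‖
          ≤ ‖P.comp Q - P₁.comp Q₀‖ + ‖P₁.comp Q₀ - fderiv ℝ (μ t s) x‖ := by
            have h : P.comp Q - fderiv ℝ (μ t s) x
                = (P.comp Q - P₁.comp Q₀) + (P₁.comp Q₀ - fderiv ℝ (μ t s) x) := by abel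
            rw [h]; exact norm_add_le _ _
        _ ≤ (‖(P - P₀).comp Q‖ + ‖(P₀ - P₁).comp Q‖ + ‖P₁.comp (Q - Q₀)‖)
            + c₁ * (t - s) ^ a := by
            gcongr
            rw [hiden]
            exact norm_add₃_le
        _ ≤ (‖P - P₀‖ * ‖Q‖ + ‖P₀ - P₁‖ * ‖Q‖ + ‖P₁‖ * ‖Q - Q₀‖) + c₁ * (t - s) ^ a := by
            gcongr <;> exact ContinuousLinearMap.opNorm_comp_le _ _
        _ ≤ (K' * ((t - s) ^ a / 2 ^ a) * (1 + 2 * ε₀)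
            + ε₀ * (K * ((t - s) ^ a / 2 ^ a)) * (1 + 2 * ε₀)
            + (1 + ε₀) * (K' * ((t - s) ^ a / 2 ^ a))) + c₁ * (t - s) ^ a := by
            have b1 : ‖P - P₀‖ * ‖Q‖ ≤ K' * ((t - s) ^ a / 2 ^ a) * (1 + 2 * ε₀) :=
              mul_le_mul hPP₀ hQ (norm_nonneg _) (by positivity)
            have b2 : ‖P₀ - P₁‖ * ‖Q‖ ≤ ε₀ * (K * ((t - s) ^ a / 2 ^ a)) * (1 + 2 * ε₀) :=
              mul_le_mul hP₀P₁ hQ (norm_nonneg _) (by positivity)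
            have b3 : ‖P₁‖ * ‖Q - Q₀‖ ≤ (1 + ε₀) * (K' * ((t - s) ^ a / 2 ^ a)) :=
              mul_le_mul hP₁n hQQ₀ (norm_nonneg _) (by positivity)
            exact add_le_add (add_le_add (add_le_add b1 b2) b3) le_rfl
        _ ≤ K' * (t - s) ^ a := arith_F hq0 hε₀ hε₀1 hK hla hK'rec

lemma flow_vs_dyadic {ρ : ℝ → ℝ → U → U} (hρ : IsFlow T ρ) {c₂ δ₀ L : ℝ}
    (hc₂ : 0 ≤ c₂) (hL : 0 ≤ L) (ha0 : 0 ≤ a)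
    (hclose : ∀ s t, 0 ≤ s → s ≤ t → t ≤ T → t - s ≤ δ₀ → ∀ x,
      ‖ρ t s x - μ t s x‖ ≤ c₂ * (t - s) ^ a)
    (hlip : ∀ k s t, 0 ≤ s → s ≤ t → t ≤ T → t - s ≤ δ₀ → ∀ x y,
      ‖dyadic μ s t k x - dyadic μ s t k y‖ ≤ L * ‖x - y‖) :
    ∀ k s t, 0 ≤ s → s ≤ t → t ≤ T → t - s ≤ δ₀ → ∀ x,
      ‖ρ t s x - dyadic μ s t k x‖ ≤ c₂ * (t - s) ^ a * ((1 + L) / 2 ^ a) ^ k := by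
  have hq0 : (0:ℝ) < 2 ^ a := Real.rpow_pos_of_pos two_pos a
  intro k
  induction k with
  | zero =>
      intro s t h0 hst hT hδ x
      have h1 : dyadic μ s t 0 x = μ t s x := dyadic_zero μ s t x
      rw [h1, pow_zero, mul_one]
      exact hclose s t h0 hst hT hδ x
  | succ k ih =>
      intro s t h0 hst hT hδ x
      set m := (s + t) / 2 with hm
      have hls : (0:ℝ) ≤ t - s := by linarith
      have hla : (0:ℝ) ≤ (t - s) ^ a := Real.rpow_nonneg hls a
      have hsm : s ≤ m := by rw [hm]; linarith
      have hmt : m ≤ t := by rw [hm]; linarith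
      have h0m : 0 ≤ m := le_trans h0 hsm
      have hmT : m ≤ T := le_trans hmt hT
      have hms : m - s = (t - s) / 2 := by rw [hm]; ring
      have htm : t - m = (t - s) / 2 := by rw [hm]; ring
      have hδms : m - s ≤ δ₀ := by rw [hms]; linarith
      have hδtm : t - m ≤ δ₀ := by rw [htm]; linarith
      have hhalf : ((t - s) / 2) ^ a = (t - s) ^ a / 2 ^ a :=
        Real.div_rpow hls (by norm_num) a
      have ems : (m - s) ^ a = (t - s) ^ a / 2 ^ a := by rw [hms]; exact hhalf
      have etm : (t - m) ^ a = (t - s) ^ a / 2 ^ a := by rw [htm]; exact hhalf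
      have hsplit : dyadic μ s t (k+1) x = dyadic μ m t k (dyadic μ s m k x) :=
        dyadic_succ μ s t k x
      have hflow : ρ t s x = ρ t m (ρ m s x) := (hρ.2 s m t h0 hsm hmt hT x).symm
      have hθ0 : (0:ℝ) ≤ ((1 + L) / 2 ^ a) ^ k := by positivity
      calc ‖ρ t s x - dyadic μ s t (k+1) x‖
          = ‖ρ t m (ρ m s x) - dyadic μ m t k (dyadic μ s m k x)‖ := by rw [hsplit, hflow]
        _ ≤ ‖ρ t m (ρ m s x) - dyadic μ m t k (ρ m s x)‖
            + ‖dyadic μ m t k (ρ m s x) - dyadic μ m t k (dyadic μ s m k x)‖ := by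
            have h : ρ t m (ρ m s x) - dyadic μ m t k (dyadic μ s m k x)
                = (ρ t m (ρ m s x) - dyadic μ m t k (ρ m s x))
                + (dyadic μ m t k (ρ m s x) - dyadic μ m t k (dyadic μ s m k x)) := by abel
            rw [h]; exact norm_add_le _ _
        _ ≤ c₂ * ((t - s) ^ a / 2 ^ a) * ((1 + L) / 2 ^ a) ^ k
            + L * (c₂ * ((t - s) ^ a / 2 ^ a) * ((1 + L) / 2 ^ a) ^ k) := by
            gcongr
            · have := ih m t h0m hmt hT hδtm (ρ m s x)
              rw [etm] at this
              exact this
            · calc ‖dyadic μ m t k (ρ m s x) - dyadic μ m t k (dyadic μ s m k x)‖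
                  ≤ L * ‖ρ m s x - dyadic μ s m k x‖ := hlip k m t h0m hmt hT hδtm _ _
                _ ≤ L * (c₂ * ((t - s) ^ a / 2 ^ a) * ((1 + L) / 2 ^ a) ^ k) := by
                    have := ih s m h0 hsm hmT hδms x
                    rw [ems] at this
                    gcongr
        _ = c₂ * (t - s) ^ a * ((1 + L) / 2 ^ a) ^ (k + 1) := by
            rw [pow_succ]
            field_simp

/-- Uniqueness in the flow construction: two flows which are both at uniform
distance `O(|t-s|^a)` from a given `C¹`-approximate flow on small intervals coincide on the whole
of `{(s,t) : 0 ≤ s ≤ t ≤ T}`. -/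
theorem flow_unique
    {T c₁ a : ℝ} (hT : 0 < T) (μ : ℝ → ℝ → U → U)
    (hμ : IsC1ApproxFlow T c₁ a μ)
    (φ ψ : ℝ → ℝ → U → U) (hφ : IsFlow T φ) (hψ : IsFlow T ψ)
    (c δ : ℝ) (hδ : 0 < δ) (hφclose : Close T a c δ φ μ)
    (c' δ' : ℝ) (hδ' : 0 < δ') (hψclose : Close T a c' δ' ψ μ) :
    ∀ s t, 0 ≤ s → s ≤ t → t ≤ T → ∀ x, φ t s x = ψ t s x := by
  have ha := hμ.a_gt_one
  have ha0 : (0:ℝ) ≤ a := by linarith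
  have hane : a ≠ 0 := by linarith
  have hc₁ := hμ.c₁_pos
  have hq0 : (0:ℝ) < 2 ^ a := Real.rpow_pos_of_pos two_pos a
  have hq2 : (2:ℝ) < 2 ^ a := by
    calc (2:ℝ) = 2 ^ (1:ℝ) := (Real.rpow_one 2).symm
      _ < 2 ^ a := Real.rpow_lt_rpow_of_exponent_lt one_lt_two ha
  obtain ⟨ε₀, hε₀, hε₀1, hε₀q⟩ :
      ∃ e : ℝ, 0 < e ∧ e ≤ 1 ∧ 4 * e ≤ 2 ^ a - 2 := by
    refine ⟨min 1 ((2 ^ a - 2) / 4), lt_min one_pos (by linarith), min_le_left _ _, ?_⟩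
    have := min_le_right (1:ℝ) ((2 ^ a - 2) / 4)
    linarith
  obtain ⟨η₀, hη₀, hnear⟩ := hμ.near_id ε₀ hε₀
  have hd1 : (0:ℝ) < 2 ^ a - 2 - ε₀ := by linarith
  have hd3 : (0:ℝ) < 2 ^ a - 2 - 3 * ε₀ := by linarith
  obtain ⟨K, hK0, hKrec⟩ : ∃ K : ℝ, 0 ≤ K ∧ (2 + ε₀) * K / 2 ^ a + c₁ ≤ K := by
    refine ⟨c₁ * 2 ^ a / (2 ^ a - 2 - ε₀), le_of_lt (div_pos (by positivity) hd1), le_of_eq ?_⟩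
    field_simp
    ring
  obtain ⟨K', hK'0, hK'rec⟩ :
      ∃ K' : ℝ, 0 < K' ∧ (2 + 3 * ε₀) * K' / 2 ^ a + 3 * K / 2 ^ a + c₁ ≤ K' := by
    refine ⟨(3 * K + c₁ * 2 ^ a) / (2 ^ a - 2 - 3 * ε₀), div_pos (by positivity) hd3,
      le_of_eq ?_⟩
    field_simp
    ring
  obtain ⟨δ₀, hδ₀, hδ₀δ, hδ₀δ', hδ₀η, hδ₀K'⟩ :
      ∃ d : ℝ, 0 < d ∧ d ≤ δ ∧ d ≤ δ' ∧ d ≤ η₀ ∧ K' * d ^ a ≤ ε₀ := by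
    have hεK : 0 < ε₀ / K' := div_pos hε₀ hK'0
    refine ⟨min (min δ δ') (min η₀ ((ε₀ / K') ^ a⁻¹)),
      lt_min (lt_min hδ hδ') (lt_min hη₀ (Real.rpow_pos_of_pos hεK _)),
      le_trans (min_le_left _ _) (min_le_left _ _),
      le_trans (min_le_left _ _) (min_le_right _ _),
      le_trans (min_le_right _ _) (min_le_left _ _), ?_⟩
    have hd0 : (0:ℝ) ≤ min (min δ δ') (min η₀ ((ε₀ / K') ^ a⁻¹)) :=
      le_of_lt (lt_min (lt_min hδ hδ') (lt_min hη₀ (Real.rpow_pos_of_pos hεK _)))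
    have h1 : min (min δ δ') (min η₀ ((ε₀ / K') ^ a⁻¹)) ≤ (ε₀ / K') ^ a⁻¹ :=
      le_trans (min_le_right _ _) (min_le_right _ _)
    have h2 := Real.rpow_le_rpow hd0 h1 ha0
    have h3 : ((ε₀ / K') ^ a⁻¹) ^ a = ε₀ / K' := by
      rw [← Real.rpow_mul hεK.le, inv_mul_cancel₀ hane, Real.rpow_one]
    rw [h3] at h2
    calc K' * (min (min δ δ') (min η₀ ((ε₀ / K') ^ a⁻¹))) ^ a ≤ K' * (ε₀ / K') :=
          mul_le_mul_of_nonneg_left h2 hK'0.le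
      _ = ε₀ := by field_simp
  -- the key dyadic estimates
  have key := dyadic_key hμ hε₀ hε₀1 hnear hK0 hK'0.le hKrec hK'rec hδ₀ hδ₀η hδ₀K'
  -- Lipschitz bound for the dyadic compositions
  have hlip : ∀ k s t, 0 ≤ s → s ≤ t → t ≤ T → t - s ≤ δ₀ → ∀ x y,
      ‖dyadic μ s t k x - dyadic μ s t k y‖ ≤ (1 + 2 * ε₀) * ‖x - y‖ := by
    intro k s t h0 hst hT' hδd x y
    have hls : (0:ℝ) ≤ t - s := by linarith
    refine lip_of_fderiv_near_id
      ((dyadic_contDiff hμ k s t h0 hst hT').differentiable two_ne_zero) (fun z => ?_) x y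
    have h1 := (key k s t h0 hst hT' hδd z).2
    have h2 := (hnear s t h0 hst hT' (le_trans hδd hδ₀η) z).2.1
    have h3 : K' * (t - s) ^ a ≤ ε₀ := by
      have h4 : (t - s) ^ a ≤ δ₀ ^ a := Real.rpow_le_rpow hls hδd ha0
      calc K' * (t - s) ^ a ≤ K' * δ₀ ^ a := mul_le_mul_of_nonneg_left h4 hK'0.le
        _ ≤ ε₀ := hδ₀K'
    calc ‖fderiv ℝ (dyadic μ s t k) z - ContinuousLinearMap.id ℝ U‖
        ≤ ‖fderiv ℝ (dyadic μ s t k) z - fderiv ℝ (μ t s) z‖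
          + ‖fderiv ℝ (μ t s) z - ContinuousLinearMap.id ℝ U‖ := by
          have h : fderiv ℝ (dyadic μ s t k) z - ContinuousLinearMap.id ℝ U
              = (fderiv ℝ (dyadic μ s t k) z - fderiv ℝ (μ t s) z)
              + (fderiv ℝ (μ t s) z - ContinuousLinearMap.id ℝ U) := by abel
          rw [h]; exact norm_add_le _ _
      _ ≤ ε₀ + ε₀ := add_le_add (le_trans h1 h3) h2
      _ = 2 * ε₀ := by ring
  have hL0 : (0:ℝ) ≤ 1 + 2 * ε₀ := by linarith
  have hθ0 : (0:ℝ) ≤ (1 + (1 + 2 * ε₀)) / 2 ^ a := by positivity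
  have hθ1 : (1 + (1 + 2 * ε₀)) / 2 ^ a < 1 := by
    rw [div_lt_one hq0]
    linarith
  -- nonnegative versions of the closeness constants
  have hφc : ∀ s t, 0 ≤ s → s ≤ t → t ≤ T → t - s ≤ δ₀ → ∀ x,
      ‖φ t s x - μ t s x‖ ≤ (max c 0) * (t - s) ^ a := by
    intro s t h0 hst hT' hδd x
    have hla : (0:ℝ) ≤ (t - s) ^ a := Real.rpow_nonneg (by linarith) a
    calc ‖φ t s x - μ t s x‖ ≤ c * (t - s) ^ a :=
          hφclose s t h0 hst hT' (le_trans hδd hδ₀δ) x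
      _ ≤ (max c 0) * (t - s) ^ a := mul_le_mul_of_nonneg_right (le_max_left _ _) hla
  have hψc : ∀ s t, 0 ≤ s → s ≤ t → t ≤ T → t - s ≤ δ₀ → ∀ x,
      ‖ψ t s x - μ t s x‖ ≤ (max c' 0) * (t - s) ^ a := by
    intro s t h0 hst hT' hδd x
    have hla : (0:ℝ) ≤ (t - s) ^ a := Real.rpow_nonneg (by linarith) a
    calc ‖ψ t s x - μ t s x‖ ≤ c' * (t - s) ^ a :=
          hψclose s t h0 hst hT' (le_trans hδd hδ₀δ') x
      _ ≤ (max c' 0) * (t - s) ^ a := mul_le_mul_of_nonneg_right (le_max_left _ _) hla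
  have hφd := flow_vs_dyadic (μ := μ) hφ (le_max_right c 0) hL0 ha0 hφc hlip
  have hψd := flow_vs_dyadic (μ := μ) hψ (le_max_right c' 0) hL0 ha0 hψc hlip
  -- equality on small intervals
  have hsmall : ∀ s t, 0 ≤ s → s ≤ t → t ≤ T → t - s ≤ δ₀ → ∀ x, φ t s x = ψ t s x := by
    intro s t h0 hst hT' hδd x
    have hbound : ∀ k : ℕ, ‖φ t s x - ψ t s x‖
        ≤ ((max c 0 + max c' 0) * (t - s) ^ a) * ((1 + (1 + 2 * ε₀)) / 2 ^ a) ^ k := by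
      intro k
      have h1 := hφd k s t h0 hst hT' hδd x
      have h2 := hψd k s t h0 hst hT' hδd x
      calc ‖φ t s x - ψ t s x‖
          ≤ ‖φ t s x - dyadic μ s t k x‖ + ‖dyadic μ s t k x - ψ t s x‖ := by
            have h : φ t s x - ψ t s x = (φ t s x - dyadic μ s t k x)
                + (dyadic μ s t k x - ψ t s x) := by abel
            rw [h]; exact norm_add_le _ _
        _ ≤ (max c 0) * (t - s) ^ a * ((1 + (1 + 2 * ε₀)) / 2 ^ a) ^ k
            + (max c' 0) * (t - s) ^ a * ((1 + (1 + 2 * ε₀)) / 2 ^ a) ^ k := by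
            refine add_le_add h1 ?_
            rw [norm_sub_rev]
            exact h2
        _ = ((max c 0 + max c' 0) * (t - s) ^ a) * ((1 + (1 + 2 * ε₀)) / 2 ^ a) ^ k := by
            ring
    have hlim : Tendsto
        (fun k : ℕ => ((max c 0 + max c' 0) * (t - s) ^ a) * ((1 + (1 + 2 * ε₀)) / 2 ^ a) ^ k)
        atTop (𝓝 0) := by
      have h := tendsto_pow_atTop_nhds_zero_of_lt_one hθ0 hθ1
      simpa using h.const_mul ((max c 0 + max c' 0) * (t - s) ^ a)
    have hle : ‖φ t s x - ψ t s x‖ ≤ 0 := ge_of_tendsto' hlim hbound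
    have := norm_le_zero_iff.mp hle
    exact sub_eq_zero.mp this
  -- globalization
  intro s t hs hst htT x
  have hsT : s ≤ T := le_trans hst htT
  obtain ⟨n, hn0, hnstep⟩ : ∃ n : ℕ, 0 < n ∧ (t - s) / n ≤ δ₀ := by
    refine ⟨⌈(t - s) / δ₀⌉₊ + 1, Nat.succ_pos _, ?_⟩
    have h1 : (t - s) / δ₀ ≤ (⌈(t - s) / δ₀⌉₊ : ℝ) := Nat.le_ceil _
    have h2 : (t - s) / δ₀ ≤ ((⌈(t - s) / δ₀⌉₊ + 1 : ℕ) : ℝ) := by push_cast; linarith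
    have h3 : t - s ≤ ((⌈(t - s) / δ₀⌉₊ + 1 : ℕ) : ℝ) * δ₀ := by
      rw [div_le_iff₀ hδ₀] at h2
      linarith
    rw [div_le_iff₀ (by positivity : (0:ℝ) < ((⌈(t - s) / δ₀⌉₊ + 1 : ℕ) : ℝ))]
    linarith
  have hn0' : (0:ℝ) < (n:ℝ) := Nat.cast_pos.mpr hn0
  have hts0 : (0:ℝ) ≤ t - s := by linarith
  have claim : ∀ j : ℕ, j ≤ n → ∀ y,
      φ (s + j * (t - s) / n) s y = ψ (s + j * (t - s) / n) s y := by
    intro j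
    induction j with
    | zero =>
        intro _ y
        simp only [Nat.cast_zero, zero_mul, zero_div, add_zero]
        rw [hφ.1 s hs hsT, hψ.1 s hs hsT]
    | succ j ihj =>
        intro hj y
        have hjn : j ≤ n := le_trans (Nat.le_succ j) hj
        have hjr : (j:ℝ) ≤ (n:ℝ) := Nat.cast_le.mpr hjn
        have hj1r : ((j + 1 : ℕ):ℝ) ≤ (n:ℝ) := Nat.cast_le.mpr hj
        have hdiv0 : (0:ℝ) ≤ (t - s) / n := by positivity
        have hsp : s ≤ s + j * (t - s) / n := by
          have : (0:ℝ) ≤ (j:ℝ) * (t - s) / n := by positivity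
          linarith
        have hp0 : (0:ℝ) ≤ s + j * (t - s) / n := le_trans hs hsp
        have hpp' : s + (j:ℝ) * (t - s) / n ≤ s + ((j + 1 : ℕ):ℝ) * (t - s) / n := by
          have h1 : (j:ℝ) * (t - s) ≤ ((j + 1 : ℕ):ℝ) * (t - s) := by
            apply mul_le_mul_of_nonneg_right _ hts0
            push_cast
            linarith
          have h2 : (j:ℝ) * (t - s) / n ≤ ((j + 1 : ℕ):ℝ) * (t - s) / n :=
            div_le_div_of_nonneg_right h1 hn0'.le |>.trans_eq rfl
          linarith
        have hp't : s + ((j + 1 : ℕ):ℝ) * (t - s) / n ≤ t := by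
          have h1 : ((j + 1 : ℕ):ℝ) * (t - s) ≤ (n:ℝ) * (t - s) :=
            mul_le_mul_of_nonneg_right hj1r hts0
          have h2 : ((j + 1 : ℕ):ℝ) * (t - s) / n ≤ (n:ℝ) * (t - s) / n := by
            apply div_le_div_of_nonneg_right h1 hn0'.le |>.trans_eq rfl
          have h3 : (n:ℝ) * (t - s) / n = t - s := by field_simp
          rw [h3] at h2
          linarith
        have hp'T : s + ((j + 1 : ℕ):ℝ) * (t - s) / n ≤ T := le_trans hp't htT
        have hlen : (s + ((j + 1 : ℕ):ℝ) * (t - s) / n) - (s + (j:ℝ) * (t - s) / n) ≤ δ₀ := by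
          have e : (s + ((j + 1 : ℕ):ℝ) * (t - s) / n) - (s + (j:ℝ) * (t - s) / n)
              = (t - s) / n := by push_cast; ring
          rw [e]
          exact hnstep
        calc φ (s + ((j + 1 : ℕ):ℝ) * (t - s) / n) s y
            = φ (s + ((j + 1 : ℕ):ℝ) * (t - s) / n) (s + (j:ℝ) * (t - s) / n)
              (φ (s + (j:ℝ) * (t - s) / n) s y) :=
              (hφ.2 s _ _ hs hsp hpp' hp'T y).symm
          _ = φ (s + ((j + 1 : ℕ):ℝ) * (t - s) / n) (s + (j:ℝ) * (t - s) / n)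
              (ψ (s + (j:ℝ) * (t - s) / n) s y) := by rw [ihj hjn y]
          _ = ψ (s + ((j + 1 : ℕ):ℝ) * (t - s) / n) (s + (j:ℝ) * (t - s) / n)
              (ψ (s + (j:ℝ) * (t - s) / n) s y) :=
              hsmall _ _ hp0 hpp' hp'T hlen _
          _ = ψ (s + ((j + 1 : ℕ):ℝ) * (t - s) / n) s y :=
              hψ.2 s _ _ hs hsp hpp' hp'T y
  have hfin := claim n le_rfl x
  have e : s + (n:ℝ) * (t - s) / n = t := by field_simp; ring
  rw [e] at hfin
  exact hfin
end
end
end
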